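/- The triple of functions χ₁(t) = −(κ + ω·tanh(tω/2))/(4√2), χ₂(t) = (κ − 3ω·tanh(tω/2))/(4√6), Φ₃(t) = ω/√((1 + e^{−tω})(1 + e^{tω})) (with Φ₁ ≡ Φ₂ ≡ 0) solves the A₂ geodesic tangent-vector system: χ₁' + Φ₃²/(2√2) = 0, χ₂' + (√3/(2√2))·Φ₃² = 0, and Φ₃' − (1/√2)·Φ₃·χ₁ − √(3/2)·Φ₃·χ₂ = 0, for all t ∈ ℝ and all real parameters κ, ω. -/

import Mathlib

open Real

lemma hasDerivAt_tanh' (x : ℝ) :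
    HasDerivAt Real.tanh (1 / Real.cosh x ^ 2) x := by
  have h : HasDerivAt (fun y => Real.sinh y / Real.cosh y)
      ((Real.cosh x * Real.cosh x - Real.sinh x * Real.sinh x) / Real.cosh x ^ 2) x :=
    (Real.hasDerivAt_sinh x).div (Real.hasDerivAt_cosh x) (ne_of_gt (Real.cosh_pos x))
  have : (Real.cosh x * Real.cosh x - Real.sinh x * Real.sinh x) = 1 := by
    nlinarith [Real.cosh_sq_sub_sinh_sq x]
  rw [this] at h
  exact h.congr_of_eventuallyEq (Filter.Eventually.of_forall fun y =>
    (Real.tanh_eq_sinh_div_cosh y))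

lemma sqrt_prod_eq (x : ℝ) :
    Real.sqrt ((1 + Real.exp (-x)) * (1 + Real.exp x)) = 2 * Real.cosh (x / 2) := by
  have h : (1 + Real.exp (-x)) * (1 + Real.exp x) = (2 * Real.cosh (x / 2)) ^ 2 := by
    have h2 : Real.cosh x = 2 * Real.cosh (x / 2) ^ 2 - 1 := by
      have := Real.cosh_two_mul (x / 2)
      rw [show 2 * (x / 2) = x by ring] at this
      nlinarith [Real.cosh_sq_sub_sinh_sq (x/2), this]
    have hc : Real.cosh x = (Real.exp x + Real.exp (-x)) / 2 := Real.cosh_eq x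
    have hmul : Real.exp (-x) * Real.exp x = 1 := by
      rw [← Real.exp_add]; simp
    nlinarith [hmul, h2, hc]
  rw [h, Real.sqrt_sq (by positivity)]

lemma tanh_sq (x : ℝ) : Real.tanh x ^ 2 = 1 - 1 / Real.cosh x ^ 2 := by
  have hc := Real.cosh_pos x
  rw [Real.tanh_eq_sinh_div_cosh]
  have := Real.cosh_sq_sub_sinh_sq x
  field_simp
  nlinarith [this]

/-- The one-root solution of the `A₂` geodesic tangent-vector system:
`χ₁ = -(κ + ω tanh(tω/2))/(4√2)`, `χ₂ = (κ - 3ω tanh(tω/2))/(4√6)`,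
`Φ₃ = ω/√((1+e^{-tω})(1+e^{tω}))` (with `Φ₁ ≡ Φ₂ ≡ 0`) satisfies
`χ₁' + Φ₃²/(2√2) = 0`, `χ₂' + (√3/(2√2)) Φ₃² = 0`,
`Φ₃' - (1/√2) Φ₃ χ₁ - √(3/2) Φ₃ χ₂ = 0`. -/
theorem A2_one_root_solution
    (κ ω : ℝ) (χ₁ χ₂ Φ₃ : ℝ → ℝ)
    (hχ₁ : χ₁ = fun t => -(κ + ω * Real.tanh (t * ω / 2)) / (4 * Real.sqrt 2))
    (hχ₂ : χ₂ = fun t => (κ - 3 * ω * Real.tanh (t * ω / 2)) / (4 * Real.sqrt 6))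
    (hΦ₃ : Φ₃ = fun t =>
      ω / Real.sqrt ((1 + Real.exp (-(t * ω))) * (1 + Real.exp (t * ω)))) :
    (∀ t, deriv χ₁ t + Φ₃ t ^ 2 / (2 * Real.sqrt 2) = 0) ∧
    (∀ t, deriv χ₂ t + Real.sqrt 3 / (2 * Real.sqrt 2) * Φ₃ t ^ 2 = 0) ∧
    (∀ t, deriv Φ₃ t - 1 / Real.sqrt 2 * Φ₃ t * χ₁ t
      - Real.sqrt (3 / 2) * Φ₃ t * χ₂ t = 0) := by
  have hΦ₃' : Φ₃ = fun t => ω / (2 * Real.cosh (t * ω / 2)) := by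
    rw [hΦ₃]; funext t; rw [sqrt_prod_eq (t * ω)]
  -- derivative of inner tanh argument
  have hT : ∀ t : ℝ, HasDerivAt (fun s : ℝ => Real.tanh (s * ω / 2))
      ((1 / Real.cosh (t * ω / 2) ^ 2) * (ω / 2)) t := by
    intro t
    have hlin : HasDerivAt (fun s : ℝ => s * ω / 2) (ω / 2) t := by
      simpa using ((hasDerivAt_id t).mul_const ω).div_const 2
    exact (hasDerivAt_tanh' (t * ω / 2)).comp t hlin
  have hcoshpos : ∀ t : ℝ, (0:ℝ) < Real.cosh (t * ω / 2) := fun t => Real.cosh_pos _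
  have hΦval : ∀ t, Φ₃ t = ω / (2 * Real.cosh (t * ω / 2)) := by
    rw [hΦ₃']; intro t; rfl
  have hΦsq : ∀ t, Φ₃ t ^ 2 = ω ^ 2 / 4 * (1 / Real.cosh (t * ω / 2) ^ 2) := by
    intro t
    have hc := (hcoshpos t).ne'
    rw [hΦval t, div_pow, mul_pow]
    field_simp
    ring_nf
  have s2 : Real.sqrt 2 > 0 := Real.sqrt_pos.mpr (by norm_num)
  have s6 : Real.sqrt 6 > 0 := Real.sqrt_pos.mpr (by norm_num)
  have s2sq : Real.sqrt 2 ^ 2 = 2 := Real.sq_sqrt (by norm_num)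
  have s6sq : Real.sqrt 6 ^ 2 = 6 := Real.sq_sqrt (by norm_num)
  refine ⟨?_, ?_, ?_⟩
  · intro t
    have hd : HasDerivAt χ₁
        (-(ω * ((1 / Real.cosh (t * ω / 2) ^ 2) * (ω / 2))) / (4 * Real.sqrt 2)) t := by
      rw [hχ₁]
      exact ((((hT t).const_mul ω).const_add κ).neg.div_const (4 * Real.sqrt 2))
    rw [hd.deriv, hΦsq t]
    have hc := (hcoshpos t).ne'
    field_simp
    ring
  · intro t
    have hd : HasDerivAt χ₂
        ((0 - 3 * ω * ((1 / Real.cosh (t * ω / 2) ^ 2) * (ω / 2))) / (4 * Real.sqrt 6)) t := by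
      rw [hχ₂]
      exact ((hasDerivAt_const t κ).sub ((hT t).const_mul (3 * ω))).div_const _
    rw [hd.deriv, hΦsq t]
    have h36 : Real.sqrt 3 * Real.sqrt 6 = 3 * Real.sqrt 2 := by
      rw [← Real.sqrt_mul (by norm_num : (0:ℝ) ≤ 3), show (3:ℝ) * 6 = 2 * 3 ^ 2 by norm_num,
        Real.sqrt_mul (by norm_num : (0:ℝ) ≤ 2), Real.sqrt_sq (by norm_num : (0:ℝ) ≤ 3)]
      ring
    have key : Real.sqrt 3 / (2 * Real.sqrt 2) = 3 / (2 * Real.sqrt 6) := by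
      rw [div_eq_div_iff (by positivity) (by positivity)]
      nlinarith [h36]
    rw [key]
    have hc := (hcoshpos t).ne'
    field_simp
    ring
  · intro t
    have hd : HasDerivAt Φ₃
        (-(ω * (2 * (Real.sinh (t * ω / 2) * (ω / 2)))) / (2 * Real.cosh (t * ω / 2)) ^ 2) t := by
      rw [hΦ₃']
      have hlin : HasDerivAt (fun s : ℝ => s * ω / 2) (ω / 2) t := by
        simpa using ((hasDerivAt_id t).mul_const ω).div_const 2
      have hcd : HasDerivAt (fun s : ℝ => 2 * Real.cosh (s * ω / 2))
          (2 * (Real.sinh (t * ω / 2) * (ω / 2))) t :=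
        by have := (((Real.hasDerivAt_cosh (t * ω / 2)).comp t hlin)).const_mul 2; exact this
      have := (hasDerivAt_const t ω).div hcd
        (by positivity : (2 * Real.cosh (t * ω / 2)) ≠ 0)
      simp at this; exact this
    rw [hd.deriv, hΦval t, hχ₁, hχ₂]
    simp only
    have hc := (hcoshpos t).ne'
    have htanh : Real.tanh (t * ω / 2) = Real.sinh (t * ω / 2) / Real.cosh (t * ω / 2) :=
      Real.tanh_eq_sinh_div_cosh _
    have s32 : Real.sqrt (3 / 2) = Real.sqrt 6 / 2 := by
      have h : (3:ℝ) / 2 = (Real.sqrt 6 / 2) ^ 2 := by rw [div_pow, s6sq]; norm_num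
      rw [h, Real.sqrt_sq (by positivity)]
    rw [htanh]
    rw [s32]
    field_simp
    ring_nf
    rw [s2sq]
    ring_nf
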